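/- Let r be prime and e_1, ..., e_m the standard basis of F_r^m. For i ∈ {1,...,m} and l ∈ {0,...,r-1}, let f_i^l(x) = x + l·e_i and X_i^l = {x : x_i = -l}; let f_0^l be the identity and X_0^l = {x : x · (1,...,1) = l}. Then for all distinct i, j ∈ {0,...,m} and all l ∈ {0,...,r-1}: f_j^l(X_i^0) = f_i^l(X_i^l). -/

import Mathlib

/-- Inner product over `ZMod r`. -/
def dotr {r m : ℕ} (x y : Fin m → ZMod r) : ZMod r := ∑ i, x i * y i

lemma dotr_comm {r m : ℕ} (x y : Fin m → ZMod r) : dotr x y = dotr y x := by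
  simp [dotr, mul_comm]

lemma dot_vt {r m : ℕ} (x : Fin m → ZMod r) (t : ℕ) (ht0 : t ≠ 0) (htm : t ≤ m) :
    dotr x (fun k => if (k : ℕ) + 1 = t then 1 else 0) = x ⟨t - 1, by omega⟩ := by
  unfold dotr
  rw [Finset.sum_eq_single (⟨t - 1, by omega⟩ : Fin m)]
  · simp [Nat.sub_add_cancel (Nat.one_le_iff_ne_zero.mpr ht0)]
  · intro k _ hk
    have h : (k : ℕ) + 1 ≠ t := by
      intro h; apply hk; apply Fin.ext; simp; omega
    simp [h]
  · simp

lemma dotr_sub_smul {r m : ℕ} (y w u : Fin m → ZMod r) (l : ZMod r) :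
    dotr (y - l • w) u = dotr y u - l * dotr w u := by
  simp [dotr, sub_mul, mul_assoc, Finset.sum_sub_distrib, Finset.mul_sum]

lemma exists_shift {r m : ℕ} (y c w : Fin m → ZMod r) (b : ZMod r) :
    (∃ x, dotr x w = b ∧ x + c = y) ↔ dotr (y - c) w = b := by
  constructor
  · rintro ⟨x, hx, rfl⟩; simpa using hx
  · intro h; exact ⟨y - c, h, by abel⟩

theorem stmt_13 (r : ℕ) [NeZero r] (hr : r.Prime) (m : ℕ)
    (i j : Fin (m + 1)) (hij : i ≠ j) (l : ZMod r) :
    -- v 0 = 0 (f_0 is the identity), v t = e_t for t ≥ 1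
    let v : Fin (m + 1) → (Fin m → ZMod r) := fun t =>
      if (t : ℕ) = 0 then 0 else fun k => if (k : ℕ) + 1 = (t : ℕ) then 1 else 0
    -- X_0^l = {x : x · (1,...,1) = l}; X_i^l = {x : x_i = -l} for i ≥ 1
    let X : Fin (m + 1) → ZMod r → Set (Fin m → ZMod r) := fun t l' =>
      if (t : ℕ) = 0 then {x | dotr x (fun _ => 1) = l'} else {x | dotr x (v t) = -l'}
    (fun x => x + l • v j) '' (X i 0) = (fun x => x + l • v i) '' (X i l) := by
  intro v X
  have hvt : ∀ t : Fin (m + 1), (t : ℕ) ≠ 0 → ∀ x : Fin m → ZMod r,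
      dotr x (v t) = x ⟨(t : ℕ) - 1, by omega⟩ := by
    intro t ht x
    simp only [v, if_neg ht]
    exact dot_vt x t ht (by omega)
  have hone : ∀ t : Fin (m + 1), (t : ℕ) ≠ 0 → dotr (v t) (fun _ => 1) = 1 := by
    intro t ht
    rw [dotr_comm, hvt t ht]
  ext y
  simp only [Set.mem_image]
  by_cases hi : (i : ℕ) = 0
  · have hj : (j : ℕ) ≠ 0 := fun h => hij (Fin.ext (by omega))
    have hX0 : X i (0 : ZMod r) = {x | dotr x (fun _ => 1) = 0} := by simp [X, hi, -Fin.val_eq_zero_iff]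
    have hXl : X i l = {x | dotr x (fun _ => 1) = l} := by simp [X, hi, -Fin.val_eq_zero_iff]
    have hvi : v i = 0 := by simp [v, hi, -Fin.val_eq_zero_iff]
    rw [hX0, hXl, hvi]
    simp only [Set.mem_setOf_eq]
    rw [exists_shift, exists_shift, smul_zero, sub_zero, dotr_sub_smul, hone j hj]
    constructor
    · intro h; linear_combination h
    · intro h; linear_combination h
  · have hX0 : X i (0 : ZMod r) = {x | dotr x (v i) = -0} := by simp [X, hi, -Fin.val_eq_zero_iff]
    have hXl : X i l = {x | dotr x (v i) = -l} := by simp [X, hi, -Fin.val_eq_zero_iff]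
    rw [hX0, hXl]
    simp only [Set.mem_setOf_eq]
    rw [exists_shift, exists_shift, dotr_sub_smul, dotr_sub_smul, neg_zero]
    have hii : dotr (v i) (v i) = 1 := by
      rw [hvt i hi]; simp [v, if_neg hi, -Fin.val_eq_zero_iff, Nat.sub_add_cancel (Nat.one_le_iff_ne_zero.mpr hi)]
    rw [hii]
    by_cases hj : (j : ℕ) = 0
    · have hz : v j = 0 := by simp [v, hj, -Fin.val_eq_zero_iff]
      have : dotr (v j) (v i) = 0 := by rw [hz, dotr_comm]; simp [dotr]
      rw [this]
      constructor
      · intro h; linear_combination h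
      · intro h; linear_combination h
    · have hji : dotr (v j) (v i) = 0 := by
        rw [hvt i hi]
        simp only [v, if_neg hj]
        have h : ((⟨(i : ℕ) - 1, by omega⟩ : Fin m) : ℕ) + 1 ≠ (j : ℕ) := by
          simp only [Fin.val_mk]
          intro h
          apply hij; apply Fin.ext; omega
        simp [h]
      rw [hji]
      constructor
      · intro h; linear_combination h
      · intro h; linear_combination h
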